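/- The decreasing permutation n (n-1) ... 2 1 can be sorted using exactly ⌈(n-1)/2⌉ block moves: this many suffice, and no fewer suffice (for n ≥ 2). -/

import Mathlib

/-- Number of descents of a list (one-line notation). -/
def desNum (p : List ℕ) : ℕ :=
  ((Finset.range (p.length - 1)).filter (fun i => p.getD (i+1) 0 < p.getD i 0)).card

/-- The extension of `p` by a leading `0` and trailing `n+1`. -/
def extList (p : List ℕ) : List ℕ := 0 :: (p ++ [p.length + 1])

/-- Number of bad pairs of `p`. -/
def badNum (p : List ℕ) : ℕ :=
  ((Finset.range (p.length + 1)).filter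
    (fun i => (extList p).getD i 0 + 1 ≠ (extList p).getD (i+1) 0)).card

/-- `q` is obtained from `p` by one block move: interchanging two disjoint
nonempty blocks of consecutive entries. -/
def IsBlockMove (p q : List ℕ) : Prop :=
  ∃ A X B Y C : List ℕ, X ≠ [] ∧ Y ≠ [] ∧
    p = A ++ X ++ B ++ Y ++ C ∧ q = A ++ Y ++ B ++ X ++ C

/-- `p` is a permutation of `{1,…,n}` in one-line notation. -/
def IsPermList (p : List ℕ) : Prop := p.Perm (List.range' 1 p.length)

/-- `p` can be sorted to the identity `1 2 … n` using at most `k` block moves. -/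
def SortableIn (p : List ℕ) (k : ℕ) : Prop :=
  ∃ m ≤ k, ∃ f : ℕ → List ℕ, f 0 = p ∧ f m = List.range' 1 p.length ∧
    ∀ i < m, IsBlockMove (f i) (f (i+1))

/-! ### Auxiliary machinery -/

/-- Descent count, recursive version. -/
def D : List ℕ → ℕ
  | [] => 0
  | [_] => 0
  | a :: b :: l => (if b < a then 1 else 0) + D (b :: l)

@[simp] lemma D_nil : D [] = 0 := rfl
@[simp] lemma D_singleton (a : ℕ) : D [a] = 0 := rfl
@[simp] lemma D_cons_cons (a b : ℕ) (l : List ℕ) :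
    D (a :: b :: l) = (if b < a then 1 else 0) + D (b :: l) := rfl

/-- Boundary descent indicator between two blocks. -/
def bd (u v : List ℕ) : ℕ :=
  if u = [] ∨ v = [] then 0 else if v.headD 0 < u.getLastD 0 then 1 else 0

@[simp] lemma bd_nil_left (v : List ℕ) : bd [] v = 0 := by simp [bd]
@[simp] lemma bd_nil_right (u : List ℕ) : bd u [] = 0 := by simp [bd]

lemma bd_cons' (u : List ℕ) (x : ℕ) (v : List ℕ) :
    bd u (x :: v) = if u = [] then 0 else if x < u.getLastD 0 then 1 else 0 := by
  simp [bd]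

lemma getLastD_ne_nil (b d : ℕ) (l : List ℕ) :
    (b :: l).getLastD d = (b :: l).getLastD 0 := by
  rw [List.getLastD_cons (a := d) (b := b), List.getLastD_cons (a := 0) (b := b)]

lemma getLastD_cons_cons (a b d : ℕ) (l : List ℕ) :
    (a :: b :: l).getLastD d = (b :: l).getLastD 0 := by
  rw [List.getLastD_cons, getLastD_ne_nil]

lemma D_append : ∀ u v : List ℕ, D (u ++ v) = D u + bd u v + D v
  | [], v => by simp
  | [a], v => by
    cases v with
    | nil => simp
    | cons c w => simp [bd]
  | a :: b :: u, v => by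
    have ih := D_append (b :: u) v
    have hbd : bd (a :: b :: u) v = bd (b :: u) v := by
      cases v with
      | nil => simp
      | cons c w => rw [bd_cons', bd_cons', getLastD_cons_cons]
                    simp [List.getLastD_cons]
    calc D ((a :: b :: u) ++ v) = (if b < a then 1 else 0) + D ((b :: u) ++ v) := rfl
    _ = (if b < a then 1 else 0) + (D (b :: u) + bd (b :: u) v + D v) := by rw [ih]
    _ = D (a :: b :: u) + bd (a :: b :: u) v + D v := by rw [D_cons_cons, hbd]; ring

lemma D_cons_append (x : ℕ) (u v : List ℕ) :
    D (x :: (u ++ v)) = D (x :: u) + bd (x :: u) v + D v := by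
  rw [← List.cons_append]; exact D_append (x :: u) v

set_option maxHeartbeats 2000000 in
/-- Key lemma: a block move decreases the number of descents by at most two. -/
lemma D_blockMove {p q : List ℕ} (h : IsBlockMove p q) : D p ≤ D q + 2 := by
  obtain ⟨A, X, B, Y, C, hX, hY, hp, hq⟩ := h
  obtain ⟨x, X', rfl⟩ := List.exists_cons_of_ne_nil hX
  obtain ⟨y, Y', rfl⟩ := List.exists_cons_of_ne_nil hY
  subst hp hq
  by_cases hB : B = []
  · subst hB
    simp only [List.append_assoc, List.cons_append, List.nil_append]
    rcases List.eq_nil_or_concat' C with rfl | ⟨C', c, rfl⟩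
    · simp only [List.append_nil]
      simp only [D_append, D_cons_append, bd_nil_right]
      by_cases hA : A = [] <;> simp only [bd_cons', hA, if_true, if_false, reduceCtorEq] <;>
        split_ifs <;> omega
    · have hC : bd (y :: Y') (C' ++ [c]) = bd (y :: Y') (C'.headD c :: (C' ++ [c]).tail) := by
        cases C' <;> simp
      have hC2 : bd (x :: X') (C' ++ [c]) = bd (x :: X') (C'.headD c :: (C' ++ [c]).tail) := by
        cases C' <;> simp
      simp only [D_append, D_cons_append]
      rw [hC, hC2]
      by_cases hA : A = [] <;> simp only [bd_cons', hA, if_true, if_false, reduceCtorEq] <;>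
        split_ifs <;> omega
  · obtain ⟨b, B', rfl⟩ := List.exists_cons_of_ne_nil hB
    simp only [List.append_assoc, List.cons_append, List.nil_append]
    rcases List.eq_nil_or_concat' C with rfl | ⟨C', c, rfl⟩
    · simp only [List.append_nil]
      simp only [D_append, D_cons_append, bd_nil_right]
      by_cases hA : A = [] <;> simp only [bd_cons', hA, if_true, if_false, reduceCtorEq] <;>
        split_ifs <;> omega
    · have hC : bd (y :: Y') (C' ++ [c]) = bd (y :: Y') (C'.headD c :: (C' ++ [c]).tail) := by
        cases C' <;> simp
      have hC2 : bd (x :: X') (C' ++ [c]) = bd (x :: X') (C'.headD c :: (C' ++ [c]).tail) := by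
        cases C' <;> simp
      simp only [D_append, D_cons_append]
      rw [hC, hC2]
      by_cases hA : A = [] <;> simp only [bd_cons', hA, if_true, if_false, reduceCtorEq] <;>
        split_ifs <;> omega

/-! ### Values of `D` on the identity and the reversal -/

lemma D_range' : ∀ (m a : ℕ), D (List.range' a m) = 0
  | 0, _ => rfl
  | 1, _ => rfl
  | (m+2), a => by
    have ih := D_range' (m+1) (a+1)
    rw [List.range'_succ] at ih ⊢
    rw [List.range'_succ]
    rw [D_cons_cons, if_neg (by omega)]
    simpa using ih

lemma rev_range'_succ (a m : ℕ) :
    (List.range' a (m+1)).reverse = (a + m) :: (List.range' a m).reverse := by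
  rw [List.range'_concat]; simp

lemma D_rev : ∀ (m a : ℕ), D ((List.range' a m).reverse) = m - 1
  | 0, _ => rfl
  | 1, a => by rw [rev_range'_succ]; simp
  | (m+2), a => by
    have ih := D_rev (m+1) a
    rw [rev_range'_succ] at ih
    rw [rev_range'_succ, rev_range'_succ]
    rw [D_cons_cons, if_pos (by omega), ih]
    omega

/-! ### The sorting strategy -/

/-- State after `k` moves of the strategy sorting the reversal. -/
def g (n k : ℕ) : List ℕ :=
  List.range' 1 k ++ (List.range' (k+1) (n - 2*k)).reverse ++ List.range' (n - k + 1) k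

lemma g_zero (n : ℕ) : g n 0 = (List.range' 1 n).reverse := by
  simp [g]

lemma range'_glue (s a b : ℕ) : List.range' s a ++ List.range' (s + a) b = List.range' s (a + b) := by
  have h := List.range'_append (s := s) (m := a) (n := b) (step := 1)
  rw [one_mul] at h
  rw [Nat.add_comm a b]
  rw [Nat.add_comm b a]
  exact h

lemma g_last (n : ℕ) (hn : 2 ≤ n) : g n (n / 2) = List.range' 1 n := by
  unfold g
  rcases Nat.even_or_odd n with ⟨m, rfl⟩ | ⟨m, rfl⟩
  · have h1 : (m + m) / 2 = m := by omega
    have h2 : m + m - 2*m = 0 := by omega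
    have h3 : m + m - m + 1 = 1 + m := by omega
    rw [h1, h2, h3]
    simp only [List.range'_zero, List.reverse_nil, List.append_nil]
    rw [range'_glue 1 m m]
  · have h1 : (2*m + 1) / 2 = m := by omega
    have h2 : 2*m + 1 - 2*m = 1 := by omega
    have h3 : 2*m + 1 - m + 1 = (m + 1) + 1 := by omega
    rw [h1, h2, h3]
    rw [show (List.range' (m+1) 1).reverse = List.range' (m+1) 1 by rw [List.range'_one]; rfl]
    rw [List.append_assoc, range'_glue (m+1) 1 m]
    rw [show (1:ℕ) + m = m + 1 from by omega]
    rw [show (m:ℕ) + 1 = 1 + m from by omega, range'_glue 1 m (1+m)]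
    congr 1; omega

lemma g_step (n k : ℕ) (h : k < n / 2) : IsBlockMove (g n k) (g n (k+1)) := by
  have hk : 2*k + 2 ≤ n := by omega
  refine ⟨List.range' 1 k, [n - k], (List.range' (k+2) (n - 2*k - 2)).reverse, [k+1],
    List.range' (n - k + 1) k, by simp, by simp, ?_, ?_⟩
  · unfold g
    have e1 : n - 2*k = (n - 2*k - 2) + 1 + 1 := by omega
    rw [e1, List.range'_succ, List.range'_concat]
    rw [show k + 1 + 1 = k + 2 from rfl]
    rw [show k + 2 + 1 * (n - 2*k - 2) = n - k from by omega]
    simp [List.reverse_append, List.append_assoc]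
  · unfold g
    have e1 : n - 2*(k+1) = n - 2*k - 2 := by omega
    have e2 : n - (k+1) + 1 = n - k := by omega
    rw [e1, e2]
    rw [List.range'_concat, show 1 + 1*k = k + 1 from by omega]
    rw [show n - k = n - k - 1 + 1 from by omega, List.range'_succ,
      show n - k - 1 + 1 = n - k from by omega, show n - k + 1 = n - k - 1 + 1 + 1 from by omega,
      show n - k - 1 + 1 = n - k from by omega]
    simp [List.append_assoc]

lemma upper (n : ℕ) (hn : 2 ≤ n) : SortableIn (List.range' 1 n).reverse (n / 2) := by
  refine ⟨n / 2, le_rfl, fun i => g n (min i (n / 2)), ?_, ?_, ?_⟩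
  · simp [g_zero]
  · simp only [Nat.min_self]
    rw [g_last n hn]
    congr 1
    simp
  · intro i hi
    show IsBlockMove (g n (min i (n/2))) (g n (min (i+1) (n/2)))
    rw [show min i (n/2) = i from by omega, show min (i+1) (n/2) = i + 1 from by omega]
    exact g_step n i hi

lemma lower (n k : ℕ) (hn : 2 ≤ n) (h : SortableIn (List.range' 1 n).reverse k) :
    n / 2 ≤ k := by
  obtain ⟨m, hmk, f, h0, hm, hstep⟩ := h
  rw [show (List.range' 1 n).reverse.length = n from by simp] at hm
  have key : ∀ i, i ≤ m → D (f 0) ≤ D (f i) + 2 * i := by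
    intro i
    induction i with
    | zero => simp
    | succ i ih =>
      intro hi
      have h1 := ih (by omega)
      have h2 := D_blockMove (hstep i (by omega))
      omega
  have hfin := key m le_rfl
  rw [h0, hm, D_rev, D_range'] at hfin
  omega

/-- The decreasing permutation needs exactly `⌈(n-1)/2⌉` block moves. -/
theorem decreasing_exact (n : ℕ) (hn : 2 ≤ n) :
    SortableIn (List.range' 1 n).reverse (n / 2) ∧
    ∀ k, SortableIn (List.range' 1 n).reverse k → n / 2 ≤ k :=
  ⟨upper n hn, fun k hk => lower n k hn hk⟩
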